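/- If P1 and P2 are independent random variables each stochastically larger than a Uniform(0,1) random variable (i.e., Pr(Pi ≤ t) ≤ t for all t in [0,1]), then Pr(P1·P2 ≤ κ_α) ≤ α, where κ_α = exp(-χ²_{4,1-α}/2) and χ²_{4,1-α} is the (1-α)-quantile of the chi-squared distribution with 4 degrees of freedom. -/

import Mathlib

open MeasureTheory ProbabilityTheory Real Set
open scoped ENNReal NNReal

lemma aux_gamma_cdf (x : ℝ) (hx : 0 ≤ x) :
    gammaMeasure 2 (1/2) (Set.Iic x) = ENNReal.ofReal (1 - Real.exp (-(x/2)) * (1 + x/2)) := by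
  rw [gammaMeasure, withDensity_apply _ measurableSet_Iic,
    lintegral_Iic_eq_lintegral_Iio_add_Icc _ hx, lintegral_gammaPDF_of_nonpos le_rfl, zero_add]
  have h1 : ∀ y ∈ Icc (0:ℝ) x, gammaPDF 2 (1/2) y
      = ENNReal.ofReal (1/4 * y * Real.exp (-(y/2))) := by
    intro y hy
    rw [gammaPDF_of_nonneg hy.1]
    congr 1
    rw [Real.Gamma_two]
    norm_num
    left; ring
  rw [setLIntegral_congr_fun measurableSet_Icc h1]
  have hcont : Continuous fun y : ℝ => 1/4 * y * Real.exp (-(y/2)) := by continuity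
  have hfi : IntegrableOn (fun y : ℝ => 1/4 * y * Real.exp (-(y/2))) (Icc 0 x) :=
    hcont.integrableOn_Icc
  rw [← ofReal_integral_eq_lintegral_ofReal hfi]
  · congr 1
    rw [integral_Icc_eq_integral_Ioc, ← intervalIntegral.integral_of_le hx]
    have key : ∀ y ∈ uIcc (0:ℝ) x, HasDerivAt (fun y : ℝ => -(Real.exp (-(y/2)) * (1 + y/2)))
        (1/4 * y * Real.exp (-(y/2))) y := by
      intro y _
      have h1 : HasDerivAt (fun y : ℝ => -(y/2)) (-(1/2)) y := by
        exact ((hasDerivAt_id y).div_const 2).neg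
      have h2 : HasDerivAt (fun y : ℝ => Real.exp (-(y/2))) (Real.exp (-(y/2)) * (-(1/2))) y :=
        (Real.hasDerivAt_exp _).comp y h1
      have h3 : HasDerivAt (fun y : ℝ => (1 + y/2)) (1/2) y := by
        simpa using ((hasDerivAt_id y).div_const 2).const_add 1
      have : HasDerivAt (fun y : ℝ => -(Real.exp (-(y/2)) * (1 + y/2))) _ y := (h2.mul h3).neg
      convert this using 1
      ring
    rw [intervalIntegral.integral_eq_sub_of_hasDerivAt key (hcont.intervalIntegrable 0 x)]
    norm_num
    ring
  · refine (ae_restrict_iff' measurableSet_Icc).mpr (ae_of_all _ fun y hy => ?_)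
    have := hy.1
    positivity

lemma aux_main {Ω : Type*} [MeasurableSpace Ω] (P : Measure Ω) [IsProbabilityMeasure P]
    (P1 P2 : Ω → ℝ) (hP1 : Measurable P1) (hP2 : Measurable P2)
    (hP1range : ∀ ω, P1 ω ∈ Set.Icc (0 : ℝ) 1)
    (hP1unif : ∀ t ∈ Set.Icc (0 : ℝ) 1, P {ω | P1 ω ≤ t} ≤ ENNReal.ofReal t)
    (hP2unif : ∀ t ∈ Set.Icc (0 : ℝ) 1, P {ω | P2 ω ≤ t} ≤ ENNReal.ofReal t)
    (hindep : IndepFun P1 P2 P)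
    (κ : ℝ) (hκ : κ ∈ Set.Ioo (0:ℝ) 1) :
    P {ω | P1 ω * P2 ω ≤ κ} ≤ ENNReal.ofReal (κ - κ * Real.log κ) := by
  obtain ⟨hκ0, hκ1⟩ := hκ
  set g : ℝ → ℝ := fun p => if p ≤ κ then 1 else κ / p with hg_def
  have hg_mble : Measurable g := Measurable.ite measurableSet_Iic measurable_const
    (measurable_const.div measurable_id)
  have hg_mem : ∀ p, g p ∈ Set.Icc (0:ℝ) 1 := by
    intro p
    by_cases h : p ≤ κ
    · simp [hg_def, h]
    · push_neg at h
      have hp0 : 0 < p := hκ0.trans h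
      simp only [hg_def, if_neg (not_le.mpr h)]
      constructor
      · positivity
      · rw [div_le_one hp0]; exact h.le
  -- Step 1: event is contained in {P1 ≤ g (P2)}
  have hsub : {ω | P1 ω * P2 ω ≤ κ} ⊆ {ω | P1 ω ≤ g (P2 ω)} := by
    intro ω hω
    simp only [Set.mem_setOf_eq] at hω ⊢
    by_cases h : P2 ω ≤ κ
    · simp only [hg_def, if_pos h]; exact (hP1range ω).2
    · push_neg at h
      have hp0 : 0 < P2 ω := hκ0.trans h
      simp only [hg_def, if_neg (not_le.mpr h)]
      rw [le_div_iff₀ hp0]; exact hω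
  refine le_trans (measure_mono hsub) ?_
  -- Step 2: independence: rewrite as product measure
  set μ1 := P.map P1 with hμ1
  set μ2 := P.map P2 with hμ2
  have : IsProbabilityMeasure μ1 := Measure.isProbabilityMeasure_map hP1.aemeasurable
  have : IsProbabilityMeasure μ2 := Measure.isProbabilityMeasure_map hP2.aemeasurable
  have hT : MeasurableSet {p : ℝ × ℝ | p.2 ≤ g p.1} :=
    measurableSet_le measurable_snd (hg_mble.comp measurable_fst)
  have hmap : P.map (fun ω => (P2 ω, P1 ω)) = μ2.prod μ1 :=
    (indepFun_iff_map_prod_eq_prod_map_map hP2.aemeasurable hP1.aemeasurable).mp hindep.symm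
  have h2 : P {ω | P1 ω ≤ g (P2 ω)} = ∫⁻ y, μ1 (Iic (g y)) ∂μ2 := by
    have : {ω | P1 ω ≤ g (P2 ω)} = (fun ω => (P2 ω, P1 ω)) ⁻¹' {p : ℝ × ℝ | p.2 ≤ g p.1} := rfl
    rw [this, ← Measure.map_apply (hP2.prodMk hP1) hT, hmap, Measure.prod_apply hT]
    congr 1
  rw [h2]
  have h3 : ∫⁻ y, μ1 (Iic (g y)) ∂μ2 ≤ ∫⁻ y, ENNReal.ofReal (g y) ∂μ2 := by
    refine lintegral_mono fun y => ?_
    rw [hμ1, Measure.map_apply hP1 measurableSet_Iic]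
    exact hP1unif (g y) (hg_mem y)
  refine h3.trans ?_
  -- Step 3: layer cake
  rw [lintegral_eq_lintegral_meas_lt μ2 (ae_of_all _ fun y => (hg_mem y).1)
    hg_mble.aemeasurable]
  -- Step 4: bound the tail measure
  set B : ℝ → ℝ≥0∞ := fun t =>
    (Ioc (0:ℝ) κ).indicator (fun _ => 1) t + (Ioo κ 1).indicator (fun t => ENNReal.ofReal (κ/t)) t
    with hB_def
  have hbound : ∀ t ∈ Ioi (0:ℝ), μ2 {y | t < g y} ≤ B t := by
    intro t ht
    simp only [mem_Ioi] at ht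
    rcases le_or_gt t κ with h1 | h1
    · calc μ2 {y | t < g y} ≤ 1 := prob_le_one
        _ ≤ B t := by
            simp only [hB_def, indicator_of_mem (mem_Ioc.mpr ⟨ht, h1⟩)]
            exact le_add_right le_rfl
    rcases lt_or_ge t 1 with h2 | h2
    · have hsub2 : {y | t < g y} ⊆ Iic (κ/t) := by
        intro y hy
        simp only [Set.mem_setOf_eq] at hy
        by_cases h : y ≤ κ
        · exact h.trans (by rw [le_div_iff₀ ht]; nlinarith)
        · push_neg at h
          simp only [hg_def, if_neg (not_le.mpr h)] at hy
          have hy0 : 0 < y := hκ0.trans h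
          rw [lt_div_iff₀ hy0] at hy
          rw [mem_Iic, le_div_iff₀ ht]
          nlinarith
      have hκt : κ / t ∈ Set.Icc (0:ℝ) 1 := by
        constructor
        · positivity
        · rw [div_le_one ht]; exact h1.le
      calc μ2 {y | t < g y} ≤ μ2 (Iic (κ/t)) := measure_mono hsub2
        _ = P {ω | P2 ω ≤ κ/t} := by rw [hμ2, Measure.map_apply hP2 measurableSet_Iic]; rfl
        _ ≤ ENNReal.ofReal (κ/t) := hP2unif _ hκt
        _ ≤ B t := by
            simp only [hB_def, indicator_of_mem (mem_Ioo.mpr ⟨h1, h2⟩)]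
            exact le_add_left le_rfl
    · have : {y | t < g y} = ∅ := by
        ext y
        simp only [Set.mem_setOf_eq, mem_empty_iff_false, iff_false, not_lt]
        exact le_trans (hg_mem y).2 h2
      simp [this]
  refine le_trans (setLIntegral_mono' measurableSet_Ioi hbound) ?_
  -- Step 5: compute the integral of B
  have hmble2 : Measurable fun t : ℝ => ENNReal.ofReal (κ/t) :=
    ENNReal.measurable_ofReal.comp (measurable_const.div measurable_id)
  rw [hB_def]
  rw [lintegral_add_left ((measurable_const.indicator measurableSet_Ioc))]
  rw [lintegral_indicator measurableSet_Ioc, lintegral_indicator measurableSet_Ioo]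
  rw [Measure.restrict_restrict measurableSet_Ioc, Measure.restrict_restrict measurableSet_Ioo]
  have i1 : Ioc (0:ℝ) κ ∩ Ioi 0 = Ioc 0 κ := Set.inter_eq_left.mpr fun x hx => hx.1
  have i2 : Ioo κ 1 ∩ Ioi (0:ℝ) = Ioo κ 1 := Set.inter_eq_left.mpr fun x hx => hκ0.trans hx.1
  rw [i1, i2]
  have e1 : ∫⁻ _ in Ioc (0:ℝ) κ, (1:ℝ≥0∞) = ENNReal.ofReal κ := by
    simp [Real.volume_Ioc]
  have e2 : ∫⁻ t in Ioo κ 1, ENNReal.ofReal (κ/t) = ENNReal.ofReal (κ * (-Real.log κ)) := by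
    rw [show (volume.restrict (Ioo κ 1)) = volume.restrict (Ioc κ 1) from
      Measure.restrict_congr_set Ioo_ae_eq_Ioc]
    have hfi : IntegrableOn (fun t : ℝ => κ/t) (Ioc κ 1) := by
      apply (ContinuousOn.integrableOn_Icc ?_).mono_set Ioc_subset_Icc_self
      exact continuousOn_const.div continuousOn_id (fun t ht => (hκ0.trans_le ht.1).ne')
    rw [← ofReal_integral_eq_lintegral_ofReal hfi]
    · congr 1
      rw [← intervalIntegral.integral_of_le hκ1.le]
      have : ∀ t : ℝ, κ / t = κ * t⁻¹ := fun t => div_eq_mul_inv κ t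
      simp_rw [this]
      rw [intervalIntegral.integral_const_mul, integral_inv (by
        intro h
        rcases (Set.mem_uIcc.mp h) with ⟨h1, _⟩ | ⟨_, h2⟩
        · exact absurd h1 (not_le.mpr hκ0)
        · linarith)]
      rw [Real.log_div one_ne_zero hκ0.ne', Real.log_one]
      ring
    · refine (ae_restrict_iff' measurableSet_Ioc).mpr (ae_of_all _ fun t ht => ?_)
      have := hκ0.trans ht.1
      positivity
  rw [e1, e2, ← ENNReal.ofReal_add hκ0.le (by nlinarith [Real.log_nonpos hκ0.le hκ1.le])]
  apply le_of_eq
  congr 1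
  ring

/-- If `P1` and `P2` are independent `[0,1]`-valued random variables, each stochastically
larger than a `Uniform(0,1)` variable (`Pr(Pi ≤ t) ≤ t` for `t ∈ [0,1]`), then
`Pr(P1 * P2 ≤ κ_α) ≤ α`, where `κ_α = exp (-χ²₄(1-α)/2)` and `χ²₄(1-α)` is the
`(1-α)`-quantile of the chi-squared distribution with 4 degrees of freedom
(the Gamma distribution with shape 2 and rate 1/2). -/
theorem prod_pvalues_combined_valid
    {Ω : Type*} [MeasurableSpace Ω] (P : Measure Ω) [IsProbabilityMeasure P]
    (P1 P2 : Ω → ℝ) (hP1 : Measurable P1) (hP2 : Measurable P2)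
    (hP1range : ∀ ω, P1 ω ∈ Set.Icc (0 : ℝ) 1)
    (hP2range : ∀ ω, P2 ω ∈ Set.Icc (0 : ℝ) 1)
    (hP1unif : ∀ t ∈ Set.Icc (0 : ℝ) 1, P {ω | P1 ω ≤ t} ≤ ENNReal.ofReal t)
    (hP2unif : ∀ t ∈ Set.Icc (0 : ℝ) 1, P {ω | P2 ω ≤ t} ≤ ENNReal.ofReal t)
    (hindep : IndepFun P1 P2 P)
    (α : ℝ) (hα : α ∈ Set.Ioo (0 : ℝ) 1)
    (χα : ℝ)
    (hχα : gammaMeasure 2 (1 / 2) (Set.Iic χα) = ENNReal.ofReal (1 - α)) :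
    P {ω | P1 ω * P2 ω ≤ Real.exp (-χα / 2)} ≤ ENNReal.ofReal α := by
  obtain ⟨hα0, hα1⟩ := hα
  -- χα is nonnegative
  have hχ0 : 0 ≤ χα := by
    by_contra h
    push_neg at h
    have h0 : gammaMeasure 2 (1/2) (Set.Iic χα) = 0 := by
      have hle : gammaMeasure 2 (1/2) (Set.Iic χα) ≤ gammaMeasure 2 (1/2) (Set.Iio 0) :=
        measure_mono (fun x hx => lt_of_le_of_lt hx h)
      have : gammaMeasure 2 (1/2) (Set.Iio 0) = 0 := by
        rw [gammaMeasure, withDensity_apply _ measurableSet_Iio]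
        exact lintegral_gammaPDF_of_nonpos le_rfl
      exact le_antisymm (this ▸ hle) zero_le
    rw [hχα] at h0
    have := ENNReal.ofReal_eq_zero.mp h0
    linarith
  set E : ℝ := Real.exp (-(χα/2)) * (1 + χα/2) with hE_def
  have hE_le_one : E ≤ 1 := by
    have h1 : 1 + χα/2 ≤ Real.exp (χα/2) := by
      have := Real.add_one_le_exp (χα/2); linarith
    calc E ≤ Real.exp (-(χα/2)) * Real.exp (χα/2) := by
          apply mul_le_mul_of_nonneg_left h1 (Real.exp_nonneg _)
      _ = 1 := by rw [← Real.exp_add]; simp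
  have hαE : α = E := by
    have := (aux_gamma_cdf χα hχ0).symm.trans hχα
    have := (ENNReal.ofReal_eq_ofReal_iff (by linarith) (by linarith)).mp this
    linarith
  have hχpos : 0 < χα := by
    rcases lt_or_eq_of_le hχ0 with h | h
    · exact h
    · exfalso
      have hE1 : E = 1 := by rw [hE_def, ← h]; norm_num
      rw [hE1] at hαE
      linarith
  set κ : ℝ := Real.exp (-χα / 2) with hκ_def
  have hκmem : κ ∈ Set.Ioo (0:ℝ) 1 := by
    constructor
    · exact Real.exp_pos _
    · rw [hκ_def]
      have : -χα / 2 < 0 := by linarith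
      calc Real.exp (-χα/2) < Real.exp 0 := Real.exp_lt_exp.mpr this
        _ = 1 := Real.exp_zero
  have hlog : Real.log κ = -χα/2 := Real.log_exp _
  have hval : κ - κ * Real.log κ = α := by
    rw [hlog, hαE, hE_def, hκ_def, neg_div]
    ring
  calc P {ω | P1 ω * P2 ω ≤ κ}
      ≤ ENNReal.ofReal (κ - κ * Real.log κ) :=
        aux_main P P1 P2 hP1 hP2 hP1range hP1unif hP2unif hindep κ hκmem
    _ = ENNReal.ofReal α := by rw [hval]
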